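/- For every n > 3, let D_n be the duplication of the Černý automaton C_n with respect to the letter b and the state 0. Then Alice has a winning strategy in the synchronization game on D_n, she can win making at most (n−1)² + 1 moves, and she cannot guarantee a win making fewer than (n−1)² + 1 moves. -/

import Mathlib

/-- Apply a word (list of letters) to a state of a DFA with transition function `δ`. -/
def applyWord {Q A : Type*} (δ : Q → A → Q) (q : Q) : List A → Q
  | [] => q
  | a :: w => applyWord δ (δ q a) w

/-- The history (list) of letters played after `n` moves of the synchronization game,
when Alice uses strategy `σA` and Bob uses strategy `σB`; Alice moves first, i.e.
the letters at even indices are chosen by Alice and those at odd indices by Bob. -/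
def playHist {A : Type*} (σA σB : List A → A) : ℕ → List A
  | 0 => []
  | n + 1 =>
      let h := playHist σA σB n
      h ++ [if n % 2 = 0 then σA h else σB h]

/-- `w` synchronizes the position `P` (a set of states holding coins) to a single state. -/
def IsResetFrom {Q A : Type*} [DecidableEq Q] (δ : Q → A → Q) (P : Finset Q)
    (w : List A) : Prop :=
  (P.image fun q => applyWord δ q w).card = 1

/-- Alice has a winning strategy in the synchronization game starting from position `P`. -/
def AliceWins {Q A : Type*} [DecidableEq Q] (δ : Q → A → Q) (P : Finset Q) : Prop :=
  ∃ σA : List A → A, ∀ σB : List A → A, ∃ k : ℕ,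
    IsResetFrom δ P (playHist σA σB k)

/-- Alice has a strategy in the synchronization game starting from position `P` that
guarantees reaching a singleton position in a play in which Alice has chosen at most
`m` letters (after `k` letters in total, Alice has chosen `(k + 1) / 2` of them). -/
def AliceWinsWithin {Q A : Type*} [DecidableEq Q] (δ : Q → A → Q) (P : Finset Q)
    (m : ℕ) : Prop :=
  ∃ σA : List A → A, ∀ σB : List A → A, ∃ k : ℕ,
    IsResetFrom δ P (playHist σA σB k) ∧ (k + 1) / 2 ≤ m

/-- Bob has a winning strategy in the synchronization game starting from position `P`:
against every strategy of Alice the position never becomes a singleton. -/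
def BobWins {Q A : Type*} [DecidableEq Q] (δ : Q → A → Q) (P : Finset Q) : Prop :=
  ∃ σB : List A → A, ∀ σA : List A → A, ∀ k : ℕ,
    ¬ IsResetFrom δ P (playHist σA σB k)

/-- The Černý automaton `C_n`: states are residues modulo `n`, the letter `a` (here
`false`) sends `0` to `1` and fixes every other state, and the letter `b` (here `true`)
adds `1` modulo `n`. -/
def cernyStep (n : ℕ) : ZMod n → Bool → ZMod n
  | m, false => if m = 0 then 1 else m
  | m, true => m + 1

/-- The duplication of the DFA `δ` with respect to the letter `b` and the state `q0`:
states are `Q × Bool` (with `false` for `0` and `true` for `1`), and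
`(q, 0)·a = (q·a, 1)`, `(q, 1)·b = (q, 0)`, `(q, 1)·a = (q0, 1)` for `a ≠ b`. -/
def dup {Q A : Type*} [DecidableEq A] (δ : Q → A → Q) (b : A) (q0 : Q) :
    Q × Bool → A → Q × Bool
  | (q, false), a => (δ q a, true)
  | (q, true), a => if a = b then (q, false) else (q0, true)

namespace AliceCerny
set_option linter.unusedSectionVars false

/-! ### Part 1: integer lifts and the Černý lower bound -/


/-- Integer lift of trajectories of the Černý automaton. -/
def lift (n : ℕ) : ℕ → List Bool → ℕ
  | q, [] => q
  | q, c :: w => lift n (if c = true ∨ q % n = 0 then q + 1 else q) w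

lemma lift_nil (n q : ℕ) : lift n q [] = q := rfl

lemma lift_cons (n q : ℕ) (c : Bool) (w : List Bool) :
    lift n q (c :: w) = lift n (if c = true ∨ q % n = 0 then q + 1 else q) w := rfl

lemma lift_cons_true (n q : ℕ) (w : List Bool) :
    lift n q (true :: w) = lift n (q + 1) w := by
  rw [lift_cons, if_pos (Or.inl rfl)]

lemma lift_cons_false_zero (n q : ℕ) (w : List Bool) (hq : q % n = 0) :
    lift n q (false :: w) = lift n (q + 1) w := by
  rw [lift_cons, if_pos (Or.inr hq)]

lemma lift_cons_false_pos (n q : ℕ) (w : List Bool) (hq : q % n ≠ 0) :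
    lift n q (false :: w) = lift n q w := by
  rw [lift_cons, if_neg (by simp [hq])]

lemma count_cons_true (c : Bool) (w : List Bool) :
    (c :: w).count true = w.count true + if c = true then 1 else 0 := by
  cases c <;> simp [List.count_cons]

lemma count_cons_false (c : Bool) (w : List Bool) :
    (c :: w).count false = w.count false + if c = false then 1 else 0 := by
  cases c <;> simp [List.count_cons]

lemma count_add_count (w : List Bool) : w.count true + w.count false = w.length := by
  induction w with
  | nil => simp
  | cons c w ih => cases c <;> simp [List.count_cons] <;> omega

lemma lift_lb (n : ℕ) (w : List Bool) : ∀ q : ℕ, q + w.count true ≤ lift n q w := by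
  induction w with
  | nil => intro q; simp [lift_nil]
  | cons c w ih =>
    intro q
    rw [count_cons_true]
    cases c
    · by_cases hq : q % n = 0
      · rw [lift_cons_false_zero n q w hq]; have := ih (q + 1); simp; omega
      · rw [lift_cons_false_pos n q w hq]; have := ih q; simp; omega
    · rw [lift_cons_true]; have := ih (q + 1); simp; omega

lemma lift_ub (n : ℕ) (w : List Bool) :
    ∀ q : ℕ, lift n q w ≤ q + w.count true + w.count false := by
  induction w with
  | nil => intro q; simp [lift_nil]
  | cons c w ih =>
    intro q
    rw [count_cons_true, count_cons_false]
    cases c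
    · by_cases hq : q % n = 0
      · rw [lift_cons_false_zero n q w hq]; have := ih (q + 1); simp; omega
      · rw [lift_cons_false_pos n q w hq]; have := ih q; simp; omega
    · rw [lift_cons_true]; have := ih (q + 1); simp; omega

lemma lift_pair (n : ℕ) (w : List Bool) : ∀ x y : ℕ, x ≤ y → y ≤ x + n →
    lift n x w ≤ lift n y w ∧ lift n y w ≤ lift n x w + n := by
  induction w with
  | nil => intro x y h1 h2; exact ⟨h1, h2⟩
  | cons c w ih =>
    intro x y h1 h2
    cases c
    · by_cases hx : x % n = 0 <;> by_cases hy : y % n = 0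
      · rw [lift_cons_false_zero n x w hx, lift_cons_false_zero n y w hy]
        exact ih (x + 1) (y + 1) (by omega) (by omega)
      · have hne : x ≠ y := fun he => hy (he ▸ hx)
        rw [lift_cons_false_zero n x w hx, lift_cons_false_pos n y w hy]
        exact ih (x + 1) y (by omega) (by omega)
      · have hne : y ≠ x + n := fun he =>
          hx (by rw [← Nat.add_mod_right x n, ← he]; exact hy)
        rw [lift_cons_false_pos n x w hx, lift_cons_false_zero n y w hy]
        exact ih x (y + 1) (by omega) (by omega)
      · rw [lift_cons_false_pos n x w hx, lift_cons_false_pos n y w hy]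
        exact ih x y h1 h2
    · rw [lift_cons_true, lift_cons_true]
      exact ih (x + 1) (y + 1) (by omega) (by omega)

lemma mod_succ_le (n q : ℕ) (hn : 0 < n) : q % n ≤ (q + (n - 1)) % n + 1 := by
  rcases Nat.eq_zero_or_pos (q % n) with h | h
  · omega
  · have h1 : (q + (n - 1)) % n = q % n - 1 := by
      rw [Nat.add_mod]
      have h2 : (n - 1) % n = n - 1 := Nat.mod_eq_of_lt (by omega)
      rw [h2]
      have h3 : q % n + (n - 1) = (q % n - 1) + n := by omega
      rw [h3, Nat.add_mod_right]
      exact Nat.mod_eq_of_lt (by have := Nat.mod_lt q hn; omega)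
    omega

lemma lift_pot (n : ℕ) (hn : 0 < n) (w : List Bool) : ∀ q : ℕ,
    (n - 1) * lift n q w + (lift n q w + (n - 1)) % n ≤
      (n - 1) * q + n * w.count true + (q + (n - 1)) % n := by
  induction w with
  | nil => intro q; simp [lift_nil]
  | cons c w ih =>
    intro q
    rw [count_cons_true]
    cases c
    · simp only [if_neg (by simp : ¬(false = true))]
      by_cases hq : q % n = 0
      · rw [lift_cons_false_zero n q w hq]
        have h := ih (q + 1)
        have e1 : (q + 1 + (n - 1)) % n = 0 := by
          have e : q + 1 + (n - 1) = q + n := by omega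
          rw [e, Nat.add_mod_right]; exact hq
        have e2 : (q + (n - 1)) % n = n - 1 := by
          rw [Nat.add_mod, hq]
          simp [Nat.mod_eq_of_lt (show n - 1 < n by omega)]
        have e3 : (n - 1) * (q + 1) = (n - 1) * q + (n - 1) := by ring
        rw [e1, e3] at h
        rw [e2]
        linarith
      · rw [lift_cons_false_pos n q w hq]
        have h := ih q
        linarith
    · norm_num
      rw [lift_cons_true]
      have h := ih (q + 1)
      have e1 : (q + 1 + (n - 1)) % n = (q + n) % n := by
        have e : q + 1 + (n - 1) = q + n := by omega
        rw [e]
      have e2 : (q + n) % n = q % n := Nat.add_mod_right q n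
      have e3 : (n - 1) * (q + 1) = (n - 1) * q + (n - 1) := by ring
      have e4 : n * (w.count true + 1) = n * w.count true + n := by ring
      have e5 := mod_succ_le n q hn
      have e6 : n - 1 + 1 = n := by omega
      rw [e1, e2, e3] at h
      rw [e4]
      linarith

lemma cast_lift (n : ℕ) [NeZero n] (w : List Bool) : ∀ q : ℕ,
    ((lift n q w : ℕ) : ZMod n) = applyWord (cernyStep n) ((q : ℕ) : ZMod n) w := by
  induction w with
  | nil => intro q; rfl
  | cons c w ih =>
    intro q
    cases c
    · show _ = applyWord (cernyStep n) (cernyStep n ((q:ℕ):ZMod n) false) w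
      by_cases hq : q % n = 0
      · have hq0 : ((q : ℕ) : ZMod n) = 0 :=
          (ZMod.natCast_eq_zero_iff q n).mpr (Nat.dvd_of_mod_eq_zero hq)
        have hs : cernyStep n ((q:ℕ):ZMod n) false = (((q + 1 : ℕ)) : ZMod n) := by
          show (if ((q:ℕ):ZMod n) = 0 then 1 else ((q:ℕ):ZMod n)) = _
          rw [if_pos hq0]
          push_cast
          rw [hq0, zero_add]
        rw [hs, lift_cons_false_zero n q w hq, ih (q + 1)]
      · have hq0 : ((q : ℕ) : ZMod n) ≠ 0 := by
          intro h
          obtain ⟨t, rfl⟩ := (ZMod.natCast_eq_zero_iff q n).mp h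
          exact hq (Nat.mul_mod_right n t)
        have hs : cernyStep n ((q:ℕ):ZMod n) false = ((q:ℕ):ZMod n) := by
          show (if ((q:ℕ):ZMod n) = 0 then 1 else ((q:ℕ):ZMod n)) = _
          rw [if_neg hq0]
        rw [hs, lift_cons_false_pos n q w hq, ih q]
    · rw [lift_cons_true]
      show _ = applyWord (cernyStep n) (cernyStep n ((q:ℕ):ZMod n) true) w
      have hs : cernyStep n ((q:ℕ):ZMod n) true = (((q + 1 : ℕ)) : ZMod n) := by
        show ((q:ℕ):ZMod n) + 1 = _
        push_cast
        ring
      rw [hs, ih (q + 1)]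

/-- The Černý lower bound: any word resetting `C_n` from the full set has length
at least `(n-1)^2`. -/
theorem cerny_lower (n : ℕ) [NeZero n] (hn : 3 < n) (w : List Bool)
    (hw : IsResetFrom (cernyStep n) Finset.univ w) : (n - 1) ^ 2 ≤ w.length := by
  obtain ⟨z, hz⟩ := Finset.card_eq_one.mp hw
  have hval : ∀ q : ZMod n, applyWord (cernyStep n) q w = z := by
    intro q
    have hm : applyWord (cernyStep n) q w ∈
        (Finset.univ.image fun q => applyWord (cernyStep n) q w) :=
      Finset.mem_image_of_mem _ (Finset.mem_univ q)
    rw [hz] at hm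
    simpa using hm
  set B := w.count true with hB
  set F := w.count false with hF
  set A : ℕ → ℕ := fun q => lift n q w - q - B with hA
  have hLA : ∀ q, lift n q w = q + B + A q := by
    intro q
    have h1 := lift_lb n w q
    simp only [hA]
    omega
  have hAF : ∀ q, A q ≤ F := by
    intro q
    have h1 := lift_ub n w q
    have h2 := hLA q
    omega
  have hstep : ∀ q : ℕ, q + 1 < n → (A q = A (q + 1) + 1 ∨ A (q + 1) = A q + (n - 1)) := by
    intro q hq
    have hmono := lift_pair n w q (q + 1) (by omega) (by omega)
    have hcast : ((lift n q w : ℕ) : ZMod n) = ((lift n (q + 1) w : ℕ) : ZMod n) := by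
      rw [cast_lift, cast_lift, hval, hval]
    have hdvd : n ∣ (lift n (q + 1) w - lift n q w) :=
      (Nat.modEq_iff_dvd' hmono.1).mp ((ZMod.natCast_eq_natCast_iff _ _ _).mp hcast)
    have hd : lift n (q + 1) w - lift n q w = 0 ∨ lift n (q + 1) w - lift n q w = n := by
      rcases Nat.eq_zero_or_pos (lift n (q + 1) w - lift n q w) with h | h
      · exact Or.inl h
      · have := Nat.le_of_dvd h hdvd
        right; omega
    have h1 := hLA q
    have h2 := hLA (q + 1)
    have h3 := hmono.1
    omega
  have hqs : ∃ q : ℕ, n - 1 ≤ A q := by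
    by_cases hex : ∃ q : ℕ, q + 1 < n ∧ A (q + 1) = A q + (n - 1)
    · obtain ⟨q, _, h⟩ := hex
      exact ⟨q + 1, by omega⟩
    · push_neg at hex
      have hall : ∀ q, q + 1 < n → A q = A (q + 1) + 1 := by
        intro q hq
        rcases hstep q hq with h | h
        · exact h
        · exact absurd h (hex q hq)
      have key : ∀ j, j < n → j ≤ A (n - 1 - j) := by
        intro j
        induction j with
        | zero => intro _; omega
        | succ j ihj =>
          intro hj
          have h1 : (n - 1 - (j + 1)) + 1 < n := by omega
          have h2 := hall (n - 1 - (j + 1)) h1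
          have h3 : (n - 1 - (j + 1)) + 1 = n - 1 - j := by omega
          rw [h3] at h2
          have h4 := ihj (by omega)
          omega
      refine ⟨0, ?_⟩
      have := key (n - 1) (by omega)
      have h5 : n - 1 - (n - 1) = 0 := by omega
      rw [h5] at this
      exact this
  obtain ⟨q, hq⟩ := hqs
  have hpot := lift_pot n (by omega) w q
  have hrho : (q + (n - 1)) % n ≤ n - 1 := by
    have := Nat.mod_lt (q + (n - 1)) (show 0 < n by omega)
    omega
  have hL := hLA q
  rw [hL] at hpot
  have e1 : (n - 1) * (q + B + A q) = (n - 1) * q + (n - 1) * B + (n - 1) * A q := by ring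
  have e2 : n * B = (n - 1) * B + B := by
    obtain ⟨m, hm⟩ : ∃ m, n = m + 1 := ⟨n - 1, by omega⟩
    subst hm
    rw [Nat.add_sub_cancel]
    ring
  rw [e1, ← hB] at hpot
  have hBbound : (n - 1) * A q ≤ B + (n - 1) := by
    rw [e2] at hpot
    omega
  have hmul : (n - 1) * (n - 1) ≤ (n - 1) * A q := Nat.mul_le_mul_left _ hq
  have hFq : n - 1 ≤ F := le_trans hq (hAF q)
  have hlen : B + F = w.length := count_add_count w
  have : (n - 1) * (n - 1) ≤ w.length := by linarith
  calc (n - 1) ^ 2 = (n - 1) * (n - 1) := sq (n - 1)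
    _ ≤ w.length := this

/-! ### Part 2: generic word/image lemmas -/

lemma applyWord_append {Q A : Type*} (δ : Q → A → Q) (u v : List A) : ∀ q : Q,
    applyWord δ q (u ++ v) = applyWord δ (applyWord δ q u) v := by
  induction u with
  | nil => intro q; rfl
  | cons c u ih => intro q; exact ih (δ q c)

lemma image_applyWord_append {Q A : Type*} [DecidableEq Q] (δ : Q → A → Q)
    (P : Finset Q) (u v : List A) :
    (P.image fun q => applyWord δ q (u ++ v)) =
      ((P.image fun q => applyWord δ q u).image fun q => applyWord δ q v) := by
  rw [Finset.image_image]
  apply Finset.image_congr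
  intro q _
  exact applyWord_append δ u v q

lemma image_applyWord_singleton {Q A : Type*} [DecidableEq Q] (δ : Q → A → Q)
    (P : Finset Q) (c : A) :
    (P.image fun q => applyWord δ q [c]) = P.image fun q => δ q c := rfl

/-! ### Part 3: the duplicated automaton and basic image steps -/

variable (n : ℕ) [NeZero n]

/-- The duplicated Černý automaton. -/
def dD (n : ℕ) : ZMod n × Bool → Bool → ZMod n × Bool := dup (cernyStep n) true (0 : ZMod n)

lemma dD_false (q : ZMod n) (c : Bool) : dD n (q, false) c = (cernyStep n q c, true) := rfl

lemma dD_true_b (q : ZMod n) : dD n (q, true) true = (q, false) := by simp [dD, dup]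

lemma dD_true_a (q : ZMod n) : dD n (q, true) false = (0, true) := by simp [dD, dup]

lemma img_step_false (S : Finset (ZMod n)) (c : Bool) :
    ((S.image fun q => (q, false)).image fun p => dD n p c) =
      ((S.image fun q => cernyStep n q c).image fun q => (q, true)) := by
  rw [Finset.image_image, Finset.image_image]
  rfl

lemma img_step_true_b (S : Finset (ZMod n)) :
    ((S.image fun q => (q, true)).image fun p => dD n p true) =
      S.image fun q => (q, false) := by
  rw [Finset.image_image]
  apply Finset.image_congr
  intro q _
  exact dD_true_b n q

lemma img_step_true_a (S : Finset (ZMod n)) (hS : S.Nonempty) :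
    ((S.image fun q => (q, true)).image fun p => dD n p false) =
      {((0 : ZMod n), true)} := by
  rw [Finset.image_image]
  have he : ((fun p => dD n p false) ∘ fun q : ZMod n => (q, true)) =
      fun _ : ZMod n => ((0 : ZMod n), true) := by
    funext q
    exact dD_true_a n q
  rw [he]
  exact Finset.image_const hS ((0 : ZMod n), true)

lemma img_univ_false :
    (Finset.univ.image fun p => dD n p false) =
      Finset.univ.image fun q : ZMod n => (q, true) := by
  apply Finset.ext
  rintro ⟨x, s⟩
  simp only [Finset.mem_image, Finset.mem_univ, true_and]
  constructor
  · rintro ⟨⟨q, u⟩, h⟩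
    rw [← h]
    cases u
    · exact ⟨cernyStep n q false, rfl⟩
    · exact ⟨0, (dD_true_a n q).symm⟩
  · rintro ⟨q, hq⟩
    rw [← hq]
    by_cases hq0 : q = 0
    · exact ⟨(0, true), by rw [dD_true_a n 0, hq0]⟩
    · refine ⟨(q, false), ?_⟩
      rw [dD_false]
      show (if q = 0 then 1 else q, true) = (q, true)
      rw [if_neg hq0]

lemma img_univ_true :
    (Finset.univ.image fun p => dD n p true) = Finset.univ := by
  apply Finset.image_univ_of_surjective
  rintro ⟨x, s⟩
  cases s
  · exact ⟨(x, true), dD_true_b n x⟩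
  · refine ⟨(x - 1, false), ?_⟩
    show dD n (x - 1, false) true = (x, true)
    rw [dD_false]
    show (x - 1 + 1, true) = (x, true)
    rw [sub_add_cancel]

/-! ### Part 4: the Černý reset word -/

/-- One pass `b^(n-1) a`. -/
def loopw (n : ℕ) : List Bool := List.replicate (n - 1) true ++ [false]

/-- The Černý reset word `a (b^(n-1) a)^(n-2)`, of length `(n-1)^2`. -/
def cw (n : ℕ) : List Bool := false :: (List.replicate (n - 2) (loopw n)).flatten

/-- The set `{1, …, m}` in `ZMod n`. -/
def Sm (n m : ℕ) : Finset (ZMod n) := (Finset.range m).image fun i => ((i + 1 : ℕ) : ZMod n)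

lemma join_replicate_length {α : Type*} (l : List α) : ∀ k,
    ((List.replicate k l).flatten).length = k * l.length := by
  intro k
  induction k with
  | zero => simp
  | succ k ih => simp [List.replicate_succ, ih, Nat.succ_mul]; omega

lemma loopw_length (hn : 0 < n) : (loopw n).length = n := by
  simp [loopw]
  omega

lemma cw_length (hn : 3 < n) : (cw n).length = (n - 1) ^ 2 := by
  have h1 : (cw n).length = 1 + (n - 2) * n := by
    have h2 : (cw n).length = ((List.replicate (n - 2) (loopw n)).flatten).length + 1 := by
      simp [cw]
    rw [h2, join_replicate_length, loopw_length n (by omega)]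
    omega
  rw [h1]
  obtain ⟨m, rfl⟩ : ∃ m, n = m + 4 := ⟨n - 4, by omega⟩
  show 1 + (m + 4 - 2) * (m + 4) = (m + 4 - 1) ^ 2
  have e1 : m + 4 - 2 = m + 2 := by omega
  have e2 : m + 4 - 1 = m + 3 := by omega
  rw [e1, e2]
  ring

/-! ### Part 5: the reset word resets `C_n` -/

lemma applyWord_replicate_true (m : ℕ) : ∀ q : ZMod n,
    applyWord (cernyStep n) q (List.replicate m true) = q + (m : ℕ) := by
  induction m with
  | zero => intro q; simp; rfl
  | succ m ih =>
    intro q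
    rw [List.replicate_succ]
    show applyWord (cernyStep n) (q + 1) (List.replicate m true) = _
    rw [ih (q + 1)]
    push_cast
    ring

lemma val_natCast_lt {a : ℕ} (ha : a < n) : ((a : ZMod n) : ZMod n).val = a :=
  ZMod.val_cast_of_lt ha

lemma natCast_ne_zero_of_lt {a : ℕ} (ha0 : a ≠ 0) (ha : a < n) : (a : ZMod n) ≠ 0 := by
  intro h
  have := ZMod.val_cast_of_lt ha
  rw [h, ZMod.val_zero] at this
  exact ha0 this.symm

lemma img_univ_cerny_a (hn : 3 < n) :
    (Finset.univ.image fun q : ZMod n => cernyStep n q false) = Sm n (n - 1) := by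
  haveI : Fact (1 < n) := ⟨by omega⟩
  apply Finset.ext
  intro x
  simp only [Sm, Finset.mem_image, Finset.mem_univ, true_and, Finset.mem_range]
  constructor
  · rintro ⟨q, hq⟩
    have hx : x ≠ 0 := by
      rw [← hq]
      show (if q = 0 then 1 else q) ≠ 0
      split
      · exact one_ne_zero
      · assumption
    refine ⟨x.val - 1, ?_, ?_⟩
    · have h1 := ZMod.val_lt x
      have h2 : x.val ≠ 0 := fun h => hx ((ZMod.val_eq_zero x).mp h)
      omega
    · have h2 : x.val ≠ 0 := fun h => hx ((ZMod.val_eq_zero x).mp h)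
      have h3 : x.val - 1 + 1 = x.val := by omega
      rw [h3]
      exact ZMod.natCast_rightInverse x
  · rintro ⟨i, hi, hx⟩
    have hxne : x ≠ 0 := by
      rw [← hx]
      exact natCast_ne_zero_of_lt n (by omega) (by omega)
    refine ⟨x, ?_⟩
    show (if x = 0 then 1 else x) = x
    rw [if_neg hxne]

lemma cerny_false_zero : cernyStep n 0 false = 1 := by
  show (if (0 : ZMod n) = 0 then 1 else 0) = 1
  rw [if_pos rfl]

lemma cerny_false_ne {q : ZMod n} (h : q ≠ 0) : cernyStep n q false = q := by
  show (if q = 0 then 1 else q) = q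
  rw [if_neg h]

lemma img_Sm_loop (hn : 3 < n) (m : ℕ) (hm2 : 2 ≤ m) (hmn : m ≤ n - 1) :
    ((Sm n m).image fun q => applyWord (cernyStep n) q (loopw n)) = Sm n (m - 1) := by
  rw [loopw, image_applyWord_append]
  have h1 : ((Sm n m).image fun q => applyWord (cernyStep n) q (List.replicate (n - 1) true)) =
      (Finset.range m).image fun i => ((i : ℕ) : ZMod n) := by
    rw [Sm, Finset.image_image]
    apply Finset.image_congr
    intro i _
    show applyWord (cernyStep n) ((i + 1 : ℕ) : ZMod n) (List.replicate (n - 1) true) = _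
    rw [applyWord_replicate_true]
    have h2 : ((i + 1 : ℕ) : ZMod n) + ((n - 1 : ℕ) : ZMod n) =
        (((i + 1) + (n - 1) : ℕ) : ZMod n) := by push_cast; ring
    rw [h2]
    have e : (i + 1) + (n - 1) = i + n := by omega
    rw [e]
    push_cast
    simp
  rw [h1, image_applyWord_singleton, Finset.image_image]
  apply Finset.ext
  intro x
  simp only [Sm, Finset.mem_image, Finset.mem_range, Function.comp]
  constructor
  · rintro ⟨i, hi, hx⟩
    by_cases hi0 : i = 0
    · subst hi0
      refine ⟨0, by omega, ?_⟩
      rw [← hx]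
      show ((0 + 1 : ℕ) : ZMod n) = cernyStep n ((0 : ℕ) : ZMod n) false
      rw [Nat.cast_zero, cerny_false_zero]
      norm_num
    · refine ⟨i - 1, by omega, ?_⟩
      have hne : ((i : ℕ) : ZMod n) ≠ 0 := natCast_ne_zero_of_lt n hi0 (by omega)
      rw [← hx]
      show ((i - 1 + 1 : ℕ) : ZMod n) = cernyStep n ((i : ℕ) : ZMod n) false
      rw [cerny_false_ne n hne]
      congr 1
      omega
  · rintro ⟨j, hj, hx⟩
    refine ⟨j + 1, by omega, ?_⟩
    have hne : ((j + 1 : ℕ) : ZMod n) ≠ 0 := natCast_ne_zero_of_lt n (by omega) (by omega)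
    show cernyStep n ((j + 1 : ℕ) : ZMod n) false = x
    rw [cerny_false_ne n hne, hx]

lemma img_Sm_join (hn : 3 < n) : ∀ k, k ≤ n - 2 →
    ((Sm n (n - 1)).image fun q =>
        applyWord (cernyStep n) q ((List.replicate k (loopw n)).flatten)) =
      Sm n (n - 1 - k) := by
  intro k
  induction k with
  | zero =>
    intro _
    show ((Sm n (n - 1)).image fun q => applyWord (cernyStep n) q []) = Sm n (n - 1)
    have h : (fun q : ZMod n => applyWord (cernyStep n) q []) = id := rfl
    rw [h, Finset.image_id]
  | succ k ih =>
    intro hk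
    rw [List.replicate_succ', List.flatten_append]
    have hfl : ([loopw n] : List (List Bool)).flatten = loopw n := by simp
    rw [hfl, image_applyWord_append, ih (by omega),
      img_Sm_loop n hn (n - 1 - k) (by omega) (by omega)]
    congr 1

lemma img_univ_cw (hn : 3 < n) :
    (Finset.univ.image fun q : ZMod n => applyWord (cernyStep n) q (cw n)) =
      {(1 : ZMod n)} := by
  have hsplit : cw n = [false] ++ (List.replicate (n - 2) (loopw n)).flatten := rfl
  rw [hsplit, image_applyWord_append, image_applyWord_singleton, img_univ_cerny_a n hn,
    img_Sm_join n hn (n - 2) (by omega)]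
  have e : n - 1 - (n - 2) = 1 := by omega
  rw [e]
  simp [Sm]

/-! ### Part 6: the synchronization game -/

lemma playHist_succ {A : Type*} (σA σB : List A → A) (k : ℕ) :
    playHist σA σB (k + 1) = playHist σA σB k ++
      [if k % 2 = 0 then σA (playHist σA σB k) else σB (playHist σA σB k)] := rfl

lemma playHist_length {A : Type*} (σA σB : List A → A) : ∀ k, (playHist σA σB k).length = k := by
  intro k
  induction k with
  | zero => rfl
  | succ k ih => rw [playHist_succ]; simp [ih]

lemma image_applyWord_nil {Q A : Type*} [DecidableEq Q] (δ : Q → A → Q) (P : Finset Q) :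
    (P.image fun q => applyWord δ q ([] : List A)) = P := by
  have h : (fun q : Q => applyWord δ q ([] : List A)) = id := rfl
  rw [h, Finset.image_id]

lemma mk_inj (b : Bool) : Function.Injective (fun q : ZMod n => (q, b)) :=
  fun _ _ h => congrArg Prod.fst h

/-- Interleaving: after each letter, insert the letter `b`. -/
def il : List Bool → List Bool
  | [] => []
  | c :: l => c :: true :: il l

lemma il_append : ∀ l1 l2 : List Bool, il (l1 ++ l2) = il l1 ++ il l2
  | [], _ => rfl
  | c :: l1, l2 => by
    show c :: true :: il (l1 ++ l2) = (c :: true :: il l1) ++ il l2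
    rw [il_append l1 l2]
    rfl

lemma img_il (v : List Bool) : ∀ S : Finset (ZMod n),
    ((S.image fun q => (q, false)).image fun p => applyWord (dD n) p (il v)) =
      ((S.image fun q => applyWord (cernyStep n) q v).image fun q => (q, false)) := by
  induction v with
  | nil =>
    intro S
    show ((S.image fun q => (q, false)).image fun p => applyWord (dD n) p []) = _
    rw [image_applyWord_nil, image_applyWord_nil]
  | cons c v ih =>
    intro S
    have hsplit : il (c :: v) = [c] ++ ([true] ++ il v) := rfl
    rw [hsplit, image_applyWord_append, image_applyWord_append, image_applyWord_singleton,
      image_applyWord_singleton, img_step_false, img_step_true_b, ih]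
    congr 1
    rw [Finset.image_image]
    apply Finset.image_congr
    intro q _
    rfl

/-- Bob's obstruction: against the always-`b` Bob, a reset needs more than `(n-1)^2`
Alice moves. -/
theorem game_lower (hn : 3 < n) (σA : List Bool → Bool) (k : ℕ)
    (hreset : IsResetFrom (dD n) Finset.univ (playHist σA (fun _ => true) k)) :
    (n - 1) ^ 2 < (k + 1) / 2 := by
  have inv : ∀ k : ℕ,
      (Finset.univ.image fun p => applyWord (dD n) p (playHist σA (fun _ => true) k)) =
          Finset.univ ∨
      (∃ v : List Bool,
        (Finset.univ.image fun p => applyWord (dD n) p (playHist σA (fun _ => true) k)) =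
          ((Finset.univ.image fun q => applyWord (cernyStep n) q v).image fun q => (q, true)) ∧
          2 * v.length + 1 ≤ k ∧ k % 2 = 1) ∨
      (∃ v : List Bool,
        (Finset.univ.image fun p => applyWord (dD n) p (playHist σA (fun _ => true) k)) =
          ((Finset.univ.image fun q => applyWord (cernyStep n) q v).image fun q => (q, false)) ∧
          2 * v.length + 2 ≤ k ∧ k % 2 = 0) := by
    intro k
    induction k with
    | zero =>
      left
      exact image_applyWord_nil _ _
    | succ k ih =>
      have hstep : (Finset.univ.image fun p =>
            applyWord (dD n) p (playHist σA (fun _ => true) (k + 1))) =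
          ((Finset.univ.image fun p => applyWord (dD n) p (playHist σA (fun _ => true) k)).image
            fun p => dD n p (if k % 2 = 0 then σA (playHist σA (fun _ => true) k) else true)) := by
        rw [playHist_succ, image_applyWord_append, image_applyWord_singleton]
      rcases ih with h | ⟨v, hP, hkl, hk2⟩ | ⟨v, hP, hkl, hk2⟩
      · by_cases hk : k % 2 = 0
        · rw [hstep, if_pos hk, h]
          cases hc : σA (playHist σA (fun _ => true) k)
          · right; left
            refine ⟨[], ?_, by simp only [List.length_nil]; omega, by omega⟩
            rw [img_univ_false, image_applyWord_nil]
          · left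
            rw [img_univ_true]
        · left
          rw [hstep, if_neg hk, h, img_univ_true]
      · right; right
        refine ⟨v, ?_, by omega, by omega⟩
        have hk : ¬ k % 2 = 0 := by omega
        rw [hstep, if_neg hk, hP, img_step_true_b]
      · right; left
        refine ⟨v ++ [σA (playHist σA (fun _ => true) k)], ?_, ?_, by omega⟩
        · rw [hstep, if_pos hk2, hP, img_step_false]
          congr 1
          rw [image_applyWord_append, image_applyWord_singleton]
        · simp only [List.length_append, List.length_cons, List.length_nil]
          omega
  have hcard : (Finset.univ.image fun p =>
      applyWord (dD n) p (playHist σA (fun _ => true) k)).card = 1 := hreset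
  rcases inv k with h | ⟨v, hP, hkl, hk2⟩ | ⟨v, hP, hkl, hk2⟩
  · exfalso
    rw [h, Finset.card_univ] at hcard
    have h2 : Fintype.card (ZMod n × Bool) = n * 2 := by
      rw [Fintype.card_prod, ZMod.card, Fintype.card_bool]
    rw [h2] at hcard
    omega
  · rw [hP, Finset.card_image_of_injective _ (mk_inj n true)] at hcard
    have hlb := cerny_lower n hn v hcard
    omega
  · rw [hP, Finset.card_image_of_injective _ (mk_inj n false)] at hcard
    have hlb := cerny_lower n hn v hcard
    omega

/-- Alice's full plan: `a` followed by the Černý reset word. -/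
def WA (n : ℕ) : List Bool := false :: cw n

/-- Alice's strategy: play the letters of `WA` in order on her turns. -/
def stratA (n : ℕ) : List Bool → Bool := fun h => (WA n).getD (h.length / 2) true

lemma take_succ_getD (l : List Bool) (i : ℕ) (h : i < l.length) :
    l.take (i + 1) = l.take i ++ [l.getD i true] := by
  rw [List.take_succ, List.getElem?_eq_getElem h, List.getD_eq_getElem l true h]
  rfl

/-- Position after the cooperative history `[a, b]` followed by interleaved `v`. -/
lemma hpos (v : List Bool) :
    (Finset.univ.image fun p => applyWord (dD n) p ([false, true] ++ il v)) =
      ((Finset.univ.image fun q => applyWord (cernyStep n) q v).image fun q => (q, false)) := by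
  have hsplit : ([false, true] : List Bool) ++ il v = [false] ++ ([true] ++ il v) := rfl
  rw [hsplit, image_applyWord_append, image_applyWord_append, image_applyWord_singleton,
    image_applyWord_singleton, img_univ_false, img_step_true_b, img_il]

theorem game_upper (hn : 3 < n) :
    AliceWinsWithin (dD n) Finset.univ ((n - 1) ^ 2 + 1) := by
  refine ⟨stratA n, ?_⟩
  intro σB
  have main : ∀ i, i ≤ (cw n).length →
      (∃ k, IsResetFrom (dD n) Finset.univ (playHist (stratA n) σB k) ∧
        (k + 1) / 2 ≤ (cw n).length + 1) ∨
      playHist (stratA n) σB (2 * i + 2) = [false, true] ++ il ((cw n).take i) := by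
    intro i
    induction i with
    | zero =>
      intro _
      have h1 : playHist (stratA n) σB 1 = [false] := by
        show playHist (stratA n) σB (0 + 1) = [false]
        rw [playHist_succ]
        simp [playHist, stratA, WA]
      have h2 : playHist (stratA n) σB 2 = [false, σB [false]] := by
        rw [show (2 : ℕ) = 1 + 1 from rfl, playHist_succ, h1]
        norm_num
      cases hb : σB [false]
      · left
        refine ⟨2, ?_, by omega⟩
        show (Finset.univ.image fun p => applyWord (dD n) p (playHist (stratA n) σB 2)).card = 1
        rw [h2, hb, show ([false, false] : List Bool) = [false] ++ [false] from rfl,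
          image_applyWord_append, image_applyWord_singleton, image_applyWord_singleton,
          img_univ_false, img_step_true_a n _ Finset.univ_nonempty]
        simp
      · right
        rw [show 2 * 0 + 2 = 2 from rfl, h2, hb]
        rfl
    | succ i ih =>
      intro hi
      rcases ih (by omega) with hdone | hgood
      · exact Or.inl hdone
      have hlen : (playHist (stratA n) σB (2 * i + 2)).length = 2 * i + 2 :=
        playHist_length _ _ _
      have hAmove : stratA n (playHist (stratA n) σB (2 * i + 2)) = (cw n).getD i true := by
        show (WA n).getD ((playHist (stratA n) σB (2 * i + 2)).length / 2) true = _
        rw [hlen, show (2 * i + 2) / 2 = i + 1 from by omega]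
        rfl
      have hc0 : (2 * i + 2) % 2 = 0 := by omega
      have h3 : playHist (stratA n) σB (2 * i + 3) =
          [false, true] ++ il ((cw n).take i) ++ [(cw n).getD i true] := by
        rw [show 2 * i + 3 = (2 * i + 2) + 1 from rfl, playHist_succ]
        simp only [hc0, reduceIte]
        rw [hAmove, hgood]
      have hc1 : ¬ ((2 * i + 3) % 2 = 0) := by omega
      have h4 : playHist (stratA n) σB (2 * i + 4) = playHist (stratA n) σB (2 * i + 3) ++
          [σB (playHist (stratA n) σB (2 * i + 3))] := by
        rw [show 2 * i + 4 = (2 * i + 3) + 1 from rfl, playHist_succ, if_neg hc1]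
      cases hb : σB (playHist (stratA n) σB (2 * i + 3))
      · left
        refine ⟨2 * i + 4, ?_, by omega⟩
        show (Finset.univ.image fun p =>
          applyWord (dD n) p (playHist (stratA n) σB (2 * i + 4))).card = 1
        rw [h4, hb, h3, image_applyWord_append, image_applyWord_singleton,
          image_applyWord_append, image_applyWord_singleton, hpos,
          img_step_false, img_step_true_a n _
            (Finset.Nonempty.image (Finset.Nonempty.image Finset.univ_nonempty _) _)]
        simp
      · right
        rw [show 2 * (i + 1) + 2 = 2 * i + 4 from by omega, h4, hb, h3,
          take_succ_getD (cw n) i (by omega), il_append]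
        simp [il]
  rcases main (cw n).length le_rfl with ⟨k, hk1, hk2⟩ | hgood
  · rw [cw_length n hn] at hk2
    exact ⟨k, hk1, hk2⟩
  · refine ⟨2 * (cw n).length + 2, ?_, ?_⟩
    · show (Finset.univ.image fun p =>
        applyWord (dD n) p (playHist (stratA n) σB (2 * (cw n).length + 2))).card = 1
      have htl : (cw n).take (cw n).length = cw n := List.take_length
      rw [hgood, htl, hpos, img_univ_cw n hn]
      simp
    · have := cw_length n hn
      omega

end AliceCerny

/-- For every `n > 3`, let `D_n` be the duplication of the Černý automaton `C_n` with
respect to the letter `b` (here `true`) and the state `0`. Then Alice has a winning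
strategy in the synchronization game on `D_n`, she can win making at most `(n-1)² + 1`
moves, and she cannot guarantee a win making fewer than `(n-1)² + 1` moves. -/
theorem alice_on_duplicated_cerny (n : ℕ) [NeZero n] (hn : 3 < n) :
    AliceWins (dup (cernyStep n) true (0 : ZMod n)) Finset.univ ∧
      AliceWinsWithin (dup (cernyStep n) true (0 : ZMod n)) Finset.univ ((n - 1) ^ 2 + 1) ∧
      ¬ AliceWinsWithin (dup (cernyStep n) true (0 : ZMod n)) Finset.univ ((n - 1) ^ 2) := by
  have hub : AliceWinsWithin (dup (cernyStep n) true (0 : ZMod n)) Finset.univ ((n - 1) ^ 2 + 1) :=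
    AliceCerny.game_upper n hn
  obtain ⟨σA, hσ⟩ := hub
  refine ⟨⟨σA, fun σB => (hσ σB).elim fun k hk => ⟨k, hk.1⟩⟩, ⟨σA, hσ⟩, ?_⟩
  rintro ⟨σA', hσ'⟩
  obtain ⟨k, hk1, hk2⟩ := hσ' (fun _ => true)
  have hlow := AliceCerny.game_lower n hn σA' k hk1
  omega
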